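/- Let n, d, d', L be positive integers with L ≥ 2. For every vector m = (m_1, …, m_L) of positive integers satisfying Σ_{ℓ=1}^{L-1} m_ℓ m_{ℓ+1} + d·m_1 + Σ_{ℓ=1}^{L} m_ℓ + d'·m_L ≥ n·d', it holds that Σ_{ℓ=1}^{L} m_ℓ + d' ≥ √(2nd' + (max(d,d')+1)² − 2·min(d,d') − 4L + 5) − max(d,d') + d' + L − 2. -/
import Mathlib

open scoped BigOperators

/-- Twice the sum of adjacent products is at most the square of the sum. -/
lemma adj_sq (k : ℕ → ℝ) (hk : ∀ i, 0 ≤ k i) :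
    ∀ n : ℕ, 2 * ∑ i ∈ Finset.range n, k i * k (i + 1) ≤ (∑ i ∈ Finset.range (n + 1), k i) ^ 2 := by
  intro n
  induction n with
  | zero => simp; positivity
  | succ n ih =>
    rw [Finset.sum_range_succ (fun i => k i * k (i + 1)), Finset.sum_range_succ k (n + 1)]
    have h1 : k n ≤ ∑ i ∈ Finset.range (n + 1), k i :=
      Finset.single_le_sum (fun i _ => hk i) (Finset.self_mem_range_succ n)
    have h2 : 0 ≤ ∑ i ∈ Finset.range (n + 1), k i :=
      Finset.sum_nonneg fun i _ => hk i
    nlinarith [hk (n + 1), hk n, sq_nonneg (k (n + 1))]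

/-- If the number of parameters
`Σ_{ℓ=1}^{L-1} m_ℓ m_{ℓ+1} + d m_1 + Σ_{ℓ=1}^L m_ℓ + d' m_L` of an
`(L+1)`-layer FNN is at least `n d'`, then the number of neurons
`Σ_{ℓ=1}^L m_ℓ + d'` is at least
`√(2nd' + (max(d,d')+1)² − 2 min(d,d') − 4L + 5) − max(d,d') + d' + L − 2`. -/
theorem stmt1 (n d d' L : ℕ) (hn : 0 < n) (hd : 0 < d) (hd' : 0 < d')
    (hL : 2 ≤ L) (m : ℕ → ℕ) (hmpos : ∀ ℓ, 1 ≤ ℓ → ℓ ≤ L → 0 < m ℓ)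
    (hparams : n * d' ≤
      (∑ ℓ ∈ Finset.Icc 1 (L - 1), m ℓ * m (ℓ + 1)) + d * m 1
        + (∑ ℓ ∈ Finset.Icc 1 L, m ℓ) + d' * m L) :
    Real.sqrt (2 * (n : ℝ) * (d' : ℝ) + (max (d : ℝ) (d' : ℝ) + 1) ^ 2
        - 2 * min (d : ℝ) (d' : ℝ) - 4 * (L : ℝ) + 5)
      - max (d : ℝ) (d' : ℝ) + (d' : ℝ) + (L : ℝ) - 2 ≤
    (((∑ ℓ ∈ Finset.Icc 1 L, m ℓ) + d' : ℕ) : ℝ) := by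
  -- the shift function: F i = m (1+i) - 1 (as a real), truncated outside [0, L)
  set F : ℕ → ℝ := fun i => if i < L then (m (1 + i) : ℝ) - 1 else 0 with hF
  have hF0 : ∀ i, 0 ≤ F i := by
    intro i
    simp only [hF]
    split
    · rename_i h
      have := hmpos (1 + i) (by omega) (by omega)
      have : (1 : ℝ) ≤ (m (1 + i) : ℝ) := by exact_mod_cast this
      linarith
    · exact le_refl 0
  have hFval : ∀ i < L, F i = (m (1 + i) : ℝ) - 1 := by
    intro i hi; simp only [hF]; rw [if_pos hi]
  set K : ℝ := ∑ i ∈ Finset.range L, F i with hK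
  set B : ℝ := ∑ i ∈ Finset.range (L - 1), F i * F (i + 1) with hB
  -- sum identities
  have hIcc : ∀ (N : ℕ) (f : ℕ → ℝ), ∑ i ∈ Finset.Icc 1 N, f i
      = ∑ i ∈ Finset.range N, f (1 + i) := by
    intro N f
    rw [← Finset.Ico_add_one_right_eq_Icc, Finset.sum_Ico_eq_sum_range]
    simp
  -- S = K + L
  have hS : ((∑ ℓ ∈ Finset.Icc 1 L, m ℓ : ℕ) : ℝ) = K + L := by
    push_cast
    rw [hIcc L (fun i => (m i : ℝ)), hK]
    have : (∑ i ∈ Finset.range L, F i) + (L : ℝ) = ∑ i ∈ Finset.range L, (F i + 1) := by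
      rw [Finset.sum_add_distrib]; simp
    rw [this]
    apply Finset.sum_congr rfl
    intro i hi
    rw [Finset.mem_range] at hi
    rw [hFval i hi]; ring
  -- adjacency sum
  have hLsplit : L - 1 + 1 = L := by omega
  have hA : ((∑ ℓ ∈ Finset.Icc 1 (L - 1), m ℓ * m (ℓ + 1) : ℕ) : ℝ)
      = B + (K - F (L - 1)) + (K - F 0) + ((L : ℝ) - 1) := by
    push_cast
    rw [hIcc (L - 1) (fun i => (m i : ℝ) * (m (i + 1) : ℝ))]
    have e1 : ∑ i ∈ Finset.range (L - 1), (m (1 + i) : ℝ) * (m (1 + i + 1) : ℝ)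
        = ∑ i ∈ Finset.range (L - 1), ((F i * F (i + 1)) + F i + F (i + 1) + 1) := by
      apply Finset.sum_congr rfl
      intro i hi
      rw [Finset.mem_range] at hi
      rw [hFval i (by omega), hFval (i + 1) (by omega)]
      have : 1 + i + 1 = 1 + (i + 1) := by omega
      rw [this]; ring
    rw [e1]
    have e2 : ∑ i ∈ Finset.range (L - 1), F i = K - F (L - 1) := by
      have : K = (∑ i ∈ Finset.range (L - 1), F i) + F (L - 1) := by
        rw [hK, ← Finset.sum_range_succ, hLsplit]
      linarith
    have e3 : ∑ i ∈ Finset.range (L - 1), F (i + 1) = K - F 0 := by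
      have h := Finset.sum_range_succ' F (L - 1)
      rw [hLsplit, ← hK] at h
      linarith
    simp only [Finset.sum_add_distrib, Finset.sum_const, Finset.card_range, nsmul_eq_mul,
      mul_one, e2, e3, ← hB]
    push_cast [Nat.cast_sub (by omega : 1 ≤ L)]
    ring
  -- first/last entries
  have hm1 : (m 1 : ℝ) = F 0 + 1 := by rw [hFval 0 (by omega)]; norm_num
  have hmL : (m L : ℝ) = F (L - 1) + 1 := by
    rw [hFval (L - 1) (by omega)]
    have : 1 + (L - 1) = L := by omega
    rw [this]; ring
  -- key positivity facts
  have hadj : 2 * B ≤ K ^ 2 := by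
    have := adj_sq F hF0 (L - 1)
    rwa [hLsplit, ← hK, ← hB] at this
  have hKnn : 0 ≤ K := Finset.sum_nonneg fun i _ => hF0 i
  have h0L : F 0 + F (L - 1) ≤ K := by
    have h1 : K = (∑ i ∈ Finset.range (L - 1), F i) + F (L - 1) := by
      rw [hK, ← Finset.sum_range_succ, hLsplit]
    have h2 : F 0 ≤ ∑ i ∈ Finset.range (L - 1), F i :=
      Finset.single_le_sum (fun i _ => hF0 i) (Finset.mem_range.mpr (by omega))
    linarith
  -- cast hparams
  have hp : (n : ℝ) * (d' : ℝ) ≤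
      ((∑ ℓ ∈ Finset.Icc 1 (L - 1), m ℓ * m (ℓ + 1) : ℕ) : ℝ) + (d : ℝ) * (m 1 : ℝ)
        + ((∑ ℓ ∈ Finset.Icc 1 L, m ℓ : ℕ) : ℝ) + (d' : ℝ) * (m L : ℝ) := by
    exact_mod_cast hparams
  rw [hA, hS, hm1, hmL] at hp
  -- abbreviations
  set D : ℝ := max (d : ℝ) (d' : ℝ) with hD
  set δ : ℝ := min (d : ℝ) (d' : ℝ) with hδ
  have hdD : (d : ℝ) ≤ D := le_max_left _ _
  have hd'D : (d' : ℝ) ≤ D := le_max_right _ _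
  have hsum : (d : ℝ) + (d' : ℝ) = D + δ := (max_add_min _ _).symm
  have hd1 : (1 : ℝ) ≤ (d : ℝ) := by exact_mod_cast hd
  have hd'1 : (1 : ℝ) ≤ (d' : ℝ) := by exact_mod_cast hd'
  have hD1 : (1 : ℝ) ≤ D := le_trans hd1 hdD
  -- the square comparison
  have hsq : 2 * (n : ℝ) * (d' : ℝ) + (D + 1) ^ 2 - 2 * δ - 4 * (L : ℝ) + 5
      ≤ (K + D + 2) ^ 2 := by
    nlinarith [hadj, hKnn, h0L, hF0 0, hF0 (L - 1),
      mul_nonneg (by linarith : (0:ℝ) ≤ D - 1) (by linarith : (0:ℝ) ≤ K - F 0 - F (L - 1)),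
      mul_nonneg (by linarith : (0:ℝ) ≤ D - (d:ℝ)) (hF0 0),
      mul_nonneg (by linarith : (0:ℝ) ≤ D - (d':ℝ)) (hF0 (L - 1))]
  have hKD2 : (0 : ℝ) ≤ K + D + 2 := by linarith
  have hsqrt : Real.sqrt (2 * (n : ℝ) * (d' : ℝ) + (D + 1) ^ 2 - 2 * δ - 4 * (L : ℝ) + 5)
      ≤ K + D + 2 := by
    calc Real.sqrt _ ≤ Real.sqrt ((K + D + 2) ^ 2) := Real.sqrt_le_sqrt hsq
    _ = K + D + 2 := Real.sqrt_sq hKD2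
  have hcast : (((∑ ℓ ∈ Finset.Icc 1 L, m ℓ) + d' : ℕ) : ℝ)
      = K + (L : ℝ) + (d' : ℝ) := by rw [Nat.cast_add, hS]
  rw [hcast]
  linarith
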